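/- Let Λ, Y ∈ S^m be real symmetric m×m matrices such that Y∘Λ = 0 and Y ∈ Φ(Λ), i.e., ⟨W∘W, Λ⟩ > 0 for every nonzero W ∈ S^m with Y∘W = 0. Then Λ is positive semidefinite. -/

import Mathlib

open Matrix

noncomputable section

def jmul {m : ℕ} (A B : Matrix (Fin m) (Fin m) ℝ) : Matrix (Fin m) (Fin m) ℝ :=
  (1 / 2 : ℝ) • (A * B + B * A)

def minner {m : ℕ} (A B : Matrix (Fin m) (Fin m) ℝ) : ℝ :=
  (A * B).trace

def memPhi {m : ℕ} (Λ Y : Matrix (Fin m) (Fin m) ℝ) : Prop :=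
  ∀ W : Matrix (Fin m) (Fin m) ℝ, W.IsSymm → W ≠ 0 → jmul Y W = 0 →
    0 < minner (jmul W W) Λ

def pderivG {n m : ℕ} (G : (Fin n → ℝ) → Matrix (Fin m) (Fin m) ℝ)
    (x : Fin n → ℝ) (k : Fin n) : Matrix (Fin m) (Fin m) ℝ :=
  Matrix.of fun i j => fderiv ℝ (fun y => G y i j) x (Pi.single k 1)

def dirDerivG {n m : ℕ} (G : (Fin n → ℝ) → Matrix (Fin m) (Fin m) ℝ)
    (x v : Fin n → ℝ) : Matrix (Fin m) (Fin m) ℝ :=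
  ∑ k, v k • pderivG G x k

def adjDG {n m : ℕ} (G : (Fin n → ℝ) → Matrix (Fin m) (Fin m) ℝ)
    (x : Fin n → ℝ) (W : Matrix (Fin m) (Fin m) ℝ) : Fin n → ℝ :=
  fun k => minner (pderivG G x k) W

def gradf {n : ℕ} (f : (Fin n → ℝ) → ℝ) (x : Fin n → ℝ) : Fin n → ℝ :=
  fun k => fderiv ℝ f x (Pi.single k 1)

def KKT1 {n m : ℕ} (f : (Fin n → ℝ) → ℝ) (G : (Fin n → ℝ) → Matrix (Fin m) (Fin m) ℝ)
    (x : Fin n → ℝ) (Λ : Matrix (Fin m) (Fin m) ℝ) : Prop :=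
  gradf f x = adjDG G x Λ ∧ Λ.PosSemidef ∧ (G x).PosSemidef ∧ jmul Λ (G x) = 0

def KKT2 {n m : ℕ} (f : (Fin n → ℝ) → ℝ) (G : (Fin n → ℝ) → Matrix (Fin m) (Fin m) ℝ)
    (x : Fin n → ℝ) (Y Λ : Matrix (Fin m) (Fin m) ℝ) : Prop :=
  gradf f x = adjDG G x Λ ∧ jmul Λ Y = 0 ∧ G x = jmul Y Y

def hessQ {n m : ℕ} (f : (Fin n → ℝ) → ℝ) (G : (Fin n → ℝ) → Matrix (Fin m) (Fin m) ℝ)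
    (Λ : Matrix (Fin m) (Fin m) ℝ) (x v : Fin n → ℝ) : ℝ :=
  iteratedFDeriv ℝ 2 (fun y => f y - minner (G y) Λ) x ![v, v]

def SOSCNLP {n m : ℕ} (f : (Fin n → ℝ) → ℝ) (G : (Fin n → ℝ) → Matrix (Fin m) (Fin m) ℝ)
    (x : Fin n → ℝ) (Y Λ : Matrix (Fin m) (Fin m) ℝ) : Prop :=
  ∀ (v : Fin n → ℝ) (W : Matrix (Fin m) (Fin m) ℝ), W.IsSymm →
    ¬(v = 0 ∧ W = 0) → dirDerivG G x v = (2 : ℝ) • jmul Y W →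
    0 < hessQ f G Λ x v + 2 * minner (jmul W W) Λ

def SONCNLP {n m : ℕ} (f : (Fin n → ℝ) → ℝ) (G : (Fin n → ℝ) → Matrix (Fin m) (Fin m) ℝ)
    (x : Fin n → ℝ) (Y Λ : Matrix (Fin m) (Fin m) ℝ) : Prop :=
  ∀ (v : Fin n → ℝ) (W : Matrix (Fin m) (Fin m) ℝ), W.IsSymm →
    dirDerivG G x v = (2 : ℝ) • jmul Y W →
    0 ≤ hessQ f G Λ x v + 2 * minner (jmul W W) Λ

def LICQ {n m : ℕ} (G : (Fin n → ℝ) → Matrix (Fin m) (Fin m) ℝ)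
    (x : Fin n → ℝ) (Y : Matrix (Fin m) (Fin m) ℝ) : Prop :=
  ∀ W : Matrix (Fin m) (Fin m) ℝ, W.IsSymm → jmul Y W = 0 → adjDG G x W = 0 → W = 0

def Nondeg {n m : ℕ} (G : (Fin n → ℝ) → Matrix (Fin m) (Fin m) ℝ)
    (x : Fin n → ℝ) : Prop :=
  ∀ W : Matrix (Fin m) (Fin m) ℝ, W.IsSymm → G x * W = 0 → adjDG G x W = 0 → W = 0

def CritCone {n m : ℕ} (f : (Fin n → ℝ) → ℝ) (G : (Fin n → ℝ) → Matrix (Fin m) (Fin m) ℝ)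
    (x : Fin n → ℝ) : Set (Fin n → ℝ) :=
  {d | (∀ u : Fin m → ℝ, G x *ᵥ u = 0 → 0 ≤ u ⬝ᵥ (dirDerivG G x d *ᵥ u)) ∧
    gradf f x ⬝ᵥ d = 0}

def IsMPInv {m : ℕ} (A P : Matrix (Fin m) (Fin m) ℝ) : Prop :=
  A * P * A = A ∧ P * A * P = P ∧ (A * P)ᵀ = A * P ∧ (P * A)ᵀ = P * A

def Hmat {n m : ℕ} (G : (Fin n → ℝ) → Matrix (Fin m) (Fin m) ℝ)
    (x : Fin n → ℝ) (Λ P : Matrix (Fin m) (Fin m) ℝ) : Matrix (Fin n) (Fin n) ℝ :=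
  Matrix.of fun i j => 2 * (pderivG G x i * P * pderivG G x j * Λ).trace

section Helpers

variable {m : ℕ}

lemma vmv_mulVec (x y z : Fin m → ℝ) : vecMulVec x y *ᵥ z = (y ⬝ᵥ z) • x := by
  ext i
  simp only [Matrix.mulVec, dotProduct, Matrix.vecMulVec_apply, Pi.smul_apply,
    smul_eq_mul, Finset.sum_mul]
  exact Finset.sum_congr rfl fun j _ => by ring

lemma mul_vmv (M : Matrix (Fin m) (Fin m) ℝ) (x y : Fin m → ℝ) :
    M * vecMulVec x y = vecMulVec (M *ᵥ x) y := by
  ext i j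
  simp only [Matrix.mul_apply, Matrix.vecMulVec_apply, Matrix.mulVec, dotProduct,
    Finset.sum_mul]
  exact Finset.sum_congr rfl fun k _ => by ring

lemma vmv_mul (x y : Fin m → ℝ) (M : Matrix (Fin m) (Fin m) ℝ) :
    vecMulVec x y * M = vecMulVec x (Mᵀ *ᵥ y) := by
  ext i j
  simp only [Matrix.mul_apply, Matrix.vecMulVec_apply, Matrix.mulVec, dotProduct,
    Matrix.transpose_apply, Finset.mul_sum]
  exact Finset.sum_congr rfl fun k _ => by ring

lemma vmv_mul_vmv (x y z w : Fin m → ℝ) :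
    vecMulVec x y * vecMulVec z w = (y ⬝ᵥ z) • vecMulVec x w := by
  ext i j
  simp only [Matrix.mul_apply, Matrix.vecMulVec_apply, Matrix.smul_apply, dotProduct,
    smul_eq_mul, Finset.sum_mul]
  exact Finset.sum_congr rfl fun k _ => by ring

lemma tr_vmv_mul (x y : Fin m → ℝ) (M : Matrix (Fin m) (Fin m) ℝ) :
    (vecMulVec x y * M).trace = y ⬝ᵥ (M *ᵥ x) := by
  simp only [Matrix.trace, Matrix.diag_apply, Matrix.mul_apply, Matrix.vecMulVec_apply,
    dotProduct, Matrix.mulVec, Finset.mul_sum]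
  rw [Finset.sum_comm]
  exact Finset.sum_congr rfl fun k _ => Finset.sum_congr rfl fun i _ => by ring

lemma vmv_smul_left (c : ℝ) (x y : Fin m → ℝ) :
    vecMulVec (c • x) y = c • vecMulVec x y := by
  ext i j; simp [Matrix.vecMulVec_apply]; ring

lemma vmv_smul_right (c : ℝ) (x y : Fin m → ℝ) :
    vecMulVec x (c • y) = c • vecMulVec x y := by
  ext i j; simp [Matrix.vecMulVec_apply]; ring

lemma vmv_zero_left (y : Fin m → ℝ) : vecMulVec (0 : Fin m → ℝ) y = 0 := by
  ext i j; simp [Matrix.vecMulVec_apply]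

lemma vmv_zero_right (x : Fin m → ℝ) : vecMulVec x (0 : Fin m → ℝ) = 0 := by
  ext i j; simp [Matrix.vecMulVec_apply]

lemma vmv_isSymm (x : Fin m → ℝ) : (vecMulVec x x).IsSymm := by
  ext i j
  simp [Matrix.transpose_apply, Matrix.vecMulVec_apply, mul_comm]

lemma dot_mulVec_symm {M : Matrix (Fin m) (Fin m) ℝ} (hM : Mᵀ = M) (x y : Fin m → ℝ) :
    x ⬝ᵥ (M *ᵥ y) = (M *ᵥ x) ⬝ᵥ y := by
  have h : ∀ i j, M j i = M i j := fun i j => by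
    conv_lhs => rw [← hM]
    rw [Matrix.transpose_apply]
  simp only [dotProduct, Matrix.mulVec, Finset.mul_sum, Finset.sum_mul]
  rw [Finset.sum_comm]
  exact Finset.sum_congr rfl fun i _ => Finset.sum_congr rfl fun j _ => by rw [h i j]; ring

lemma dot_self_pos {x : Fin m → ℝ} (hx : x ≠ 0) : 0 < x ⬝ᵥ x := by
  obtain ⟨i, hi⟩ := Function.ne_iff.mp hx
  exact Finset.sum_pos' (fun j _ => mul_self_nonneg _)
    ⟨i, Finset.mem_univ i, mul_self_pos.mpr hi⟩

lemma jmul_self (W : Matrix (Fin m) (Fin m) ℝ) : jmul W W = W * W := by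
  unfold jmul
  ext i j
  simp only [Matrix.smul_apply, Matrix.add_apply, smul_eq_mul]
  ring

lemma isSymm_isHermitian {M : Matrix (Fin m) (Fin m) ℝ} (hM : M.IsSymm) : M.IsHermitian := by
  show Mᴴ = M
  ext i j
  simp [Matrix.conjTranspose_apply]
  exact congrFun (congrFun hM i) j

end Helpers

theorem stmt0 {m : ℕ} (Λ Y : Matrix (Fin m) (Fin m) ℝ)
    (hΛ : Λ.IsSymm) (hY : Y.IsSymm)
    (hYΛ : jmul Y Λ = 0) (hPhi : memPhi Λ Y) :
    Λ.PosSemidef := by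
  classical
  have hΛt : Λᵀ = Λ := hΛ
  have hYt : Yᵀ = Y := hY
  have hΛh : Λ.IsHermitian := isSymm_isHermitian hΛ
  have hYh : Y.IsHermitian := isSymm_isHermitian hY
  have hYYh : (Y * Y).IsHermitian := by
    show (Y * Y)ᴴ = Y * Y
    simp [Matrix.conjTranspose_mul, hYh.eq, hYt]
  have hanti : Λ * Y = -(Y * Λ) := by
    have h2 : Y * Λ + Λ * Y = 0 := by
      have h := hYΛ
      unfold jmul at h
      rcases smul_eq_zero.mp h with h | h
      · norm_num at h
      · exact h
    exact eq_neg_of_add_eq_zero_right h2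
  have hcomm : Λ * (Y * Y) = (Y * Y) * Λ := by
    calc Λ * (Y * Y) = Λ * Y * Y := by rw [mul_assoc]
      _ = -(Y * Λ) * Y := by rw [hanti]
      _ = -(Y * (Λ * Y)) := by rw [neg_mul, mul_assoc]
      _ = -(Y * -(Y * Λ)) := by rw [hanti]
      _ = Y * Y * Λ := by rw [mul_neg, neg_neg, ← mul_assoc]
  by_contra hns
  obtain ⟨i, hi⟩ : ∃ i, hΛh.eigenvalues i < 0 := by
    by_contra h
    push_neg at h
    exact hns (hΛh.posSemidef_iff_eigenvalues_nonneg.mpr (fun j => h j))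
  set a := hΛh.eigenvalues i with ha
  have hane : a ≠ 0 := ne_of_lt hi
  -- joint eigenvector of Λ and Y*Y
  have hcommE : Commute (Matrix.toEuclideanLin Λ) (Matrix.toEuclideanLin (Y * Y)) := by
    refine LinearMap.ext fun x => ?_
    simp only [Module.End.mul_apply]
    apply (WithLp.equiv 2 (Fin m → ℝ)).injective
    simp [Matrix.mulVec_mulVec, hcomm, mul_assoc]
  have hEne : Module.End.eigenspace (Matrix.toEuclideanLin Λ) a ≠ ⊥ := by
    intro hbot
    have hmem : hΛh.eigenvectorBasis i ∈ Module.End.eigenspace (Matrix.toEuclideanLin Λ) a := by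
      rw [Module.End.mem_eigenspace_iff]
      apply (WithLp.equiv 2 (Fin m → ℝ)).injective
      simpa using hΛh.mulVec_eigenvectorBasis i
    rw [hbot, Submodule.mem_bot] at hmem
    exact hΛh.eigenvectorBasis.orthonormal.ne_zero i hmem
  obtain ⟨b, u, hune, hΛu, hY2u⟩ :
      ∃ (b : ℝ) (u : Fin m → ℝ), u ≠ 0 ∧ Λ *ᵥ u = a • u ∧ (Y * Y) *ᵥ u = b • u := by
    have hBs : (Matrix.toEuclideanLin (Y * Y)).IsSymmetric :=
      Matrix.isHermitian_iff_isSymmetric.mp hYYh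
    have hsup := LinearMap.IsSymmetric.iSup_eigenspace_inf_eigenspace_of_commute
      (A := Matrix.toEuclideanLin Λ) (α := a) hBs hcommE
    have hex : ∃ b : ℝ, (Module.End.eigenspace (Matrix.toEuclideanLin Λ) a ⊓
        Module.End.eigenspace (Matrix.toEuclideanLin (Y * Y)) b) ≠ ⊥ := by
      by_contra h
      push_neg at h
      exact hEne (by rw [← hsup]; exact iSup_eq_bot.mpr h)
    obtain ⟨b, hb⟩ := hex
    obtain ⟨u, hu, hune⟩ := Submodule.ne_bot_iff _ |>.mp hb
    obtain ⟨hu1, hu2⟩ := Submodule.mem_inf.mp hu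
    rw [Module.End.mem_eigenspace_iff] at hu1 hu2
    refine ⟨b, WithLp.equiv 2 (Fin m → ℝ) u, ?_, ?_, ?_⟩
    · simpa using hune
    · have := congrArg (WithLp.equiv 2 (Fin m → ℝ)) hu1
      simpa using this
    · have := congrArg (WithLp.equiv 2 (Fin m → ℝ)) hu2
      simpa using this
  set v := Y *ᵥ u with hv
  have hΛv : Λ *ᵥ v = (-a) • v := by
    rw [hv, Matrix.mulVec_mulVec, hanti, Matrix.neg_mulVec, ← Matrix.mulVec_mulVec, hΛu,
      Matrix.mulVec_smul, ← neg_smul]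
  have hYv : Y *ᵥ v = b • u := by rw [hv, Matrix.mulVec_mulVec]; exact hY2u
  have huu := dot_self_pos hune
  have hbvv : v ⬝ᵥ v = b * (u ⬝ᵥ u) := by
    calc v ⬝ᵥ v = u ⬝ᵥ (Y *ᵥ v) := by rw [dot_mulVec_symm hYt u v, ← hv]
      _ = u ⬝ᵥ (b • u) := by rw [hYv]
      _ = b * (u ⬝ᵥ u) := by rw [dotProduct_smul]; rfl
  have huv : u ⬝ᵥ v = 0 := by
    have h1 : u ⬝ᵥ (Λ *ᵥ v) = (-a) * (u ⬝ᵥ v) := by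
      rw [hΛv, dotProduct_smul]; rfl
    have h2 : u ⬝ᵥ (Λ *ᵥ v) = a * (u ⬝ᵥ v) := by
      rw [dot_mulVec_symm hΛt, hΛu, smul_dotProduct]; rfl
    have h3 : a * (u ⬝ᵥ v) = 0 := by nlinarith [h1, h2]
    exact (mul_eq_zero.mp h3).resolve_left hane
  have hvu : v ⬝ᵥ u = 0 := by rw [dotProduct_comm]; exact huv
  by_cases hvz : v = 0
  · -- Case Yu = 0 : W = u uᵀ
    set W := vecMulVec u u with hW
    have hWs : W.IsSymm := vmv_isSymm u
    have hWne : W ≠ 0 := by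
      obtain ⟨j, hj⟩ := Function.ne_iff.mp hune
      intro h0
      exact hj (mul_self_eq_zero.mp
        (by simpa [hW, Matrix.vecMulVec_apply] using congrFun (congrFun h0 j) j))
    have hjm : jmul Y W = 0 := by
      rw [jmul, hW, mul_vmv, vmv_mul, hYt, ← hv, hvz, vmv_zero_left, vmv_zero_right]
      simp
    have hpos := hPhi W hWs hWne hjm
    have hcalc : minner (jmul W W) Λ = (u ⬝ᵥ u) * (a * (u ⬝ᵥ u)) := by
      rw [jmul_self, minner, hW, vmv_mul_vmv, Matrix.smul_mul, Matrix.trace_smul, tr_vmv_mul,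
        hΛu, dotProduct_smul]
      rfl
    rw [hcalc] at hpos
    nlinarith [mul_pos huu huu]
  · -- Case Yu ≠ 0 : W = u uᵀ - b⁻¹ v vᵀ
    have hvv := dot_self_pos hvz
    have hbpos : 0 < b := by nlinarith
    have hbne : b ≠ 0 := ne_of_gt hbpos
    set W := vecMulVec u u - b⁻¹ • vecMulVec v v with hW
    have hWs : W.IsSymm := by
      rw [hW, Matrix.IsSymm, Matrix.transpose_sub, Matrix.transpose_smul,
        vmv_isSymm u, vmv_isSymm v]
    have hWu : W *ᵥ u = (u ⬝ᵥ u) • u := by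
      rw [hW, Matrix.sub_mulVec, vmv_mulVec, Matrix.smul_mulVec, vmv_mulVec, hvu,
        zero_smul, smul_zero, sub_zero]
    have hWne : W ≠ 0 := by
      intro h0
      rw [h0, Matrix.zero_mulVec] at hWu
      exact hune ((smul_eq_zero.mp hWu.symm).resolve_left (ne_of_gt huu))
    have hYP : Y * vecMulVec u u = vecMulVec v u := by rw [mul_vmv, ← hv]
    have hPY : vecMulVec u u * Y = vecMulVec u v := by rw [vmv_mul, hYt, ← hv]
    have hYQ : Y * vecMulVec v v = b • vecMulVec u v := by rw [mul_vmv, hYv, vmv_smul_left]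
    have hQY : vecMulVec v v * Y = b • vecMulVec v u := by
      rw [vmv_mul, hYt, hYv, vmv_smul_right]
    have hjm : jmul Y W = 0 := by
      rw [jmul, hW, Matrix.mul_sub, Matrix.sub_mul, Matrix.mul_smul, Matrix.smul_mul,
        hYP, hPY, hYQ, hQY, smul_smul, smul_smul, inv_mul_cancel₀ hbne, one_smul, one_smul]
      rw [sub_add_sub_comm]
      simp [add_comm]
    have hpos := hPhi W hWs hWne hjm
    have hPQ : vecMulVec u u * vecMulVec v v = 0 := by rw [vmv_mul_vmv, huv, zero_smul]
    have hQP : vecMulVec v v * vecMulVec u u = 0 := by rw [vmv_mul_vmv, hvu, zero_smul]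
    have hWW : W * W = (u ⬝ᵥ u) • vecMulVec u u +
        (b⁻¹ * (b⁻¹ * (v ⬝ᵥ v))) • vecMulVec v v := by
      rw [hW]
      simp only [Matrix.sub_mul, Matrix.mul_sub, Matrix.smul_mul, Matrix.mul_smul,
        hPQ, hQP, vmv_mul_vmv, smul_zero, sub_zero, zero_sub, smul_smul]
      module
    have hcalc : minner (jmul W W) Λ = (u ⬝ᵥ u) * (a * (u ⬝ᵥ u)) +
        (b⁻¹ * (b⁻¹ * (v ⬝ᵥ v))) * ((-a) * (v ⬝ᵥ v)) := by
      rw [jmul_self, minner, hWW, Matrix.add_mul, Matrix.trace_add, Matrix.smul_mul,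
        Matrix.smul_mul, Matrix.trace_smul, Matrix.trace_smul, tr_vmv_mul, tr_vmv_mul,
        hΛu, hΛv, dotProduct_smul, dotProduct_smul]
      rfl
    rw [hcalc, hbvv] at hpos
    have hzero : (u ⬝ᵥ u) * (a * (u ⬝ᵥ u)) +
        (b⁻¹ * (b⁻¹ * (b * (u ⬝ᵥ u)))) * ((-a) * (b * (u ⬝ᵥ u))) = 0 := by
      field_simp
      ring
    linarith
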